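/- There is no triple of strictly positive integers (a_1,a_2,a_3) with M_3(a_1,a_2,a_3) = T; moreover, for a triple of strictly positive integers, M_3(a_1,a_2,a_3) = −T holds if and only if (a_1,a_2,a_3) = (1,1,2). -/

import Mathlib

/-- The elementary matrix `[[a, -1], [1, 0]]`. -/
def genMat (a : ℤ) : Matrix (Fin 2) (Fin 2) ℤ := !![a, -1; 1, 0]

/-- `Mprod [a₁, …, aₙ] = [[aₙ,-1],[1,0]] ⋯ [[a₁,-1],[1,0]]`. -/
def Mprod (l : List ℤ) : Matrix (Fin 2) (Fin 2) ℤ := ((l.map genMat).reverse).prod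

lemma mprod3 (a₁ a₂ a₃ : ℤ) :
    Mprod [a₁, a₂, a₃] = !![(a₃*a₂-1)*a₁ - a₃, -(a₃*a₂-1); a₂*a₁ - 1, -a₂] := by
  simp [Mprod, genMat]
  exact ⟨⟨by ring, by ring⟩, by ring⟩

/-- `M₃ = T` has no positive solution, and `M₃ = -T` has the unique positive
solution `(1,1,2)`. -/
theorem stmt15 (a₁ a₂ a₃ : ℤ) (h₁ : 0 < a₁) (h₂ : 0 < a₂) (h₃ : 0 < a₃) :
    Mprod [a₁, a₂, a₃] ≠ !![1, 1; 0, 1] ∧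
    (Mprod [a₁, a₂, a₃] = -!![1, 1; 0, 1] ↔ (a₁, a₂, a₃) = (1, 1, 2)) := by
  rw [mprod3]
  constructor
  · intro h
    have h11 := congrFun (congrFun h 1) 1
    simp at h11
    omega
  · constructor
    · intro h
      have e00 := congrFun (congrFun h 0) 0
      have e01 := congrFun (congrFun h 0) 1
      have e10 := congrFun (congrFun h 1) 0
      have e11 := congrFun (congrFun h 1) 1
      simp at e00 e01 e10 e11
      have ha2 : a₂ = 1 := by omega
      subst ha2
      have ha1 : a₁ = 1 := by omega
      subst ha1
      simp at e01 ⊢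
      omega
    · rintro h
      simp at h
      obtain ⟨h1, h2, h3⟩ := h
      subst h1; subst h2; subst h3
      norm_num
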